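/- Let a ∈ (0,1) and b := √(1 − a²). Suppose ψ = (ψ₁,ψ₂) : 𝔻 → 𝔹₂ is holomorphic and B is a Blaschke product of degree 2 such that F_ε ∘ ψ = B on 𝔻 for every ε ∈ [0,1). Then b·ψ₁² = a²·ψ₂ on 𝔻, B = ψ₁²/a² on 𝔻, and there exist α ∈ 𝔻 and η ∈ ℂ with |η| = 1 such that B = η·m_α²; moreover ψ₂ = b·η·m_α² and ψ₁² = a²·η·m_α² on 𝔻. -/

import Mathlib

open Metric Set Complex

noncomputable section

/-- `ℂⁿ` with the Euclidean norm; `𝔹ₙ` is `Metric.ball 0 1` in this space. -/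
abbrev En (n : ℕ) := EuclideanSpace ℂ (Fin n)

/-- The Möbius map `m_a` interchanging `0` and `a`. -/
def mob (a z : ℂ) : ℂ := (a - z) / (1 - (starRingEnd ℂ) a * z)

/-- A Blaschke product of degree `k`: `z ↦ η * ∏ j, m_{α j}(z)` with `|η| = 1`, `α j ∈ 𝔻`. -/
def IsBlaschke (k : ℕ) (B : ℂ → ℂ) : Prop :=
  ∃ η : ℂ, ‖η‖ = 1 ∧ ∃ α : Fin k → ℂ, (∀ j, α j ∈ ball (0 : ℂ) 1) ∧
    ∀ z : ℂ, B z = η * ∏ j, mob (α j) z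

/-- The Pick problem `𝔹ₙ → 𝔻`, `z j ↦ lam j`, is extremal: it is solvable by a holomorphic
map `𝔹ₙ → 𝔻`, but by no holomorphic solution with `sup_{𝔹ₙ} |G| < 1`. -/
def ExtremalPick {n : ℕ} {ι : Type} (z : ι → En n) (lam : ι → ℂ) : Prop :=
  (∃ F : En n → ℂ, DifferentiableOn ℂ F (ball 0 1) ∧
      MapsTo F (ball (0 : En n) 1) (ball (0 : ℂ) 1) ∧ ∀ j, F (z j) = lam j) ∧
  ¬ ∃ G : En n → ℂ, DifferentiableOn ℂ G (ball 0 1) ∧ (∀ j, G (z j) = lam j) ∧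
      ∃ r : ℝ, r < 1 ∧ ∀ x ∈ ball (0 : En n) 1, ‖G x‖ ≤ r

/-- An extremal 3-point Pick problem is non-degenerate if no 2-point subproblem is extremal. -/
def ExtremalPick3Nondeg {n : ℕ} (z : Fin 3 → En n) (lam : Fin 3 → ℂ) : Prop :=
  ExtremalPick z lam ∧
    ∀ i j : Fin 3, i ≠ j → ¬ ExtremalPick ![z i, z j] ![lam i, lam j]

/-- The function `F(z) = (z₁² + 2bz₂)/(2 − a²)` with `b = √(1 − a²)`. -/
def Fa (a : ℝ) (z : En 2) : ℂ :=
  ((z 0) ^ 2 + 2 * ((Real.sqrt (1 - a ^ 2) : ℝ) : ℂ) * z 1) / (2 - (a : ℂ) ^ 2)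

/-- The function `F_ε(z) = F(z)/√(1 − (ε²/(2−a²)²)(bz₁² − a²z₂)²)`, principal branch. -/
def Feps (a ε : ℝ) (z : En 2) : ℂ :=
  Fa a z /
    ((1 - ((ε : ℂ) ^ 2 / (2 - (a : ℂ) ^ 2) ^ 2) *
        (((Real.sqrt (1 - a ^ 2) : ℝ) : ℂ) * (z 0) ^ 2 - (a : ℂ) ^ 2 * z 1) ^ 2) ^
      ((1 : ℂ) / 2))

private lemma one_sub_ne_zero_of_abs_lt' {x : ℂ} (hx : ‖x‖ < 1) : (1:ℂ) - x ≠ 0 := by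
  intro h
  rw [sub_eq_zero] at h
  rw [← h] at hx
  simp at hx

private lemma mob_denom_ne' {c x : ℂ} (hc : ‖c‖ < 1) (hx : ‖x‖ < 1) :
    (1:ℂ) - (starRingEnd ℂ) c * x ≠ 0 := by
  apply one_sub_ne_zero_of_abs_lt'
  rw [norm_mul, Complex.norm_conj]
  nlinarith [norm_nonneg c, norm_nonneg x]

private lemma mob_ne_zero' {c x : ℂ} (hc : ‖c‖ < 1) (hx : ‖x‖ < 1)
    (hne : x ≠ c) : mob c x ≠ 0 :=
  div_ne_zero (sub_ne_zero_of_ne (Ne.symm hne)) (mob_denom_ne' hc hx)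

private lemma hasDerivAt_mob' (c x : ℂ) (h : (1:ℂ) - (starRingEnd ℂ) c * x ≠ 0) :
    HasDerivAt (mob c)
      ((-1 * (1 - (starRingEnd ℂ) c * x) - (c - x) * (-((starRingEnd ℂ) c * 1))) /
        (1 - (starRingEnd ℂ) c * x) ^ 2) x := by
  have h1 : HasDerivAt (fun y : ℂ => c - y) (-1) x := (hasDerivAt_id x).const_sub c
  have h2 : HasDerivAt (fun y : ℂ => 1 - (starRingEnd ℂ) c * y) (-((starRingEnd ℂ) c * 1)) x :=
    ((hasDerivAt_id x).const_mul ((starRingEnd ℂ) c)).const_sub 1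
  exact h1.div h2 h

/-- if `ψ : 𝔻 → 𝔹₂` is holomorphic and `B` is a Blaschke product of degree `2`
with `F_ε ∘ ψ = B` on `𝔻` for all `ε ∈ [0,1)`, then `bψ₁² = a²ψ₂` and `B = ψ₁²/a²` on `𝔻`,
and `B = η m_α²`, `ψ₂ = bη m_α²`, `ψ₁² = a²η m_α²` on `𝔻` for some `α ∈ 𝔻`, `|η| = 1`. -/
theorem stmt_10 (a : ℝ) (ha : a ∈ Ioo (0 : ℝ) 1) (b : ℝ) (hb : b = Real.sqrt (1 - a ^ 2))
    (ψ : ℂ → En 2) (hψ : DifferentiableOn ℂ ψ (ball 0 1))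
    (hψm : MapsTo ψ (ball (0 : ℂ) 1) (ball (0 : En 2) 1))
    (B : ℂ → ℂ) (hB : IsBlaschke 2 B)
    (heq : ∀ ε ∈ Ico (0 : ℝ) 1, ∀ lam ∈ ball (0 : ℂ) 1, Feps a ε (ψ lam) = B lam) :
    (∀ lam ∈ ball (0 : ℂ) 1,
        (b : ℂ) * (ψ lam 0) ^ 2 = (a : ℂ) ^ 2 * ψ lam 1 ∧
        B lam = (ψ lam 0) ^ 2 / (a : ℂ) ^ 2) ∧
      ∃ α ∈ ball (0 : ℂ) 1, ∃ η : ℂ, ‖η‖ = 1 ∧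
        ∀ lam ∈ ball (0 : ℂ) 1,
          B lam = η * (mob α lam) ^ 2 ∧
          ψ lam 1 = (b : ℂ) * η * (mob α lam) ^ 2 ∧
          (ψ lam 0) ^ 2 = (a : ℂ) ^ 2 * η * (mob α lam) ^ 2 := by
  obtain ⟨ha0, ha1⟩ := ha
  obtain ⟨η, hη, α, hα, hBdef⟩ := hB
  have hηne : η ≠ 0 := by
    intro h; rw [h] at hη; simp at hη
  have haC : (a:ℂ) ≠ 0 := by
    simpa using ne_of_gt ha0
  have haC2 : ((a:ℂ))^2 ≠ 0 := pow_ne_zero 2 haC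
  have h2a : (2:ℂ) - (a:ℂ)^2 ≠ 0 := by
    have h : (2 - a^2 : ℝ) ≠ 0 := by nlinarith
    have h2 := Complex.ofReal_ne_zero.mpr h
    push_cast at h2
    exact h2
  have hbsq : ((b:ℝ):ℂ)^2 = 1 - (a:ℂ)^2 := by
    rw [hb]
    have h1 : (0:ℝ) ≤ 1 - a^2 := by nlinarith
    have h2 := Real.sq_sqrt h1
    rw [← Complex.ofReal_pow, h2]
    push_cast
    ring
  -- ε = 0 : B = F ∘ ψ on the ball
  have hA : ∀ lam ∈ ball (0:ℂ) 1, B lam = Fa a (ψ lam) := by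
    intro lam hlam
    have h0 := heq 0 ⟨le_refl 0, one_pos⟩ lam hlam
    rw [← h0]
    simp [Feps]
  -- nonvanishing of B off {α 0, α 1}
  have habs : ∀ lam ∈ ball (0:ℂ) 1, ‖lam‖ < 1 := by
    intro lam hlam
    simpa [Complex.dist_eq] using hlam
  have hBne : ∀ lam ∈ ball (0:ℂ) 1, lam ≠ α 0 → lam ≠ α 1 → B lam ≠ 0 := by
    intro lam hlam h0 h1
    rw [hBdef lam, Fin.prod_univ_two]
    exact mul_ne_zero hηne (mul_ne_zero
        (mob_ne_zero' (habs _ (hα 0)) (habs _ hlam) h0)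
      (mob_ne_zero' (habs _ (hα 1)) (habs _ hlam) h1))
  -- key : where B ≠ 0, the quantity g ∘ ψ vanishes
  have hkey : ∀ lam ∈ ball (0:ℂ) 1, B lam ≠ 0 →
      ((b:ℝ):ℂ) * (ψ lam 0)^2 - (a:ℂ)^2 * ψ lam 1 = 0 := by
    intro lam hlam hB0
    have h12 := heq (1/2) ⟨by norm_num, by norm_num⟩ lam hlam
    rw [Feps, ← hb, ← hA lam hlam] at h12
    set g : ℂ := ((b:ℝ):ℂ) * (ψ lam 0)^2 - (a:ℂ)^2 * ψ lam 1 with hg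
    set w : ℂ := 1 - (((1/2:ℝ):ℂ)^2 / (2 - (a:ℂ)^2)^2) * g^2 with hw
    set s : ℂ := w ^ ((1:ℂ)/2) with hs
    have hBs : B lam / s = B lam := h12
    have hsne : s ≠ 0 := by
      intro h; rw [h, div_zero] at hBs; exact hB0 hBs.symm
    have hs1 : s = 1 := by
      have h' : B lam = B lam * s := (div_eq_iff hsne).mp hBs
      exact mul_left_cancel₀ hB0 (h'.symm.trans (mul_one (B lam)).symm)
    have hwne : w ≠ 0 := by
      intro h
      rw [hs, h, Complex.zero_cpow (by norm_num : (1:ℂ)/2 ≠ 0)] at hs1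
      exact one_ne_zero hs1.symm
    have hw1 : w = 1 := by
      have hss : s * s = w := by
        rw [hs, ← Complex.cpow_add _ _ hwne]
        norm_num
      rw [hs1, mul_one] at hss
      exact hss.symm
    have hc : (((1/2:ℝ):ℂ)^2 / (2 - (a:ℂ)^2)^2) ≠ 0 := by
      apply div_ne_zero
      · norm_num
      · exact pow_ne_zero 2 h2a
    have hg2 : g^2 = 0 := by
      have h0 : (((1/2:ℝ):ℂ)^2 / (2 - (a:ℂ)^2)^2) * g^2 = 0 := by
        rw [hw] at hw1
        linear_combination -hw1
      exact (mul_eq_zero.mp h0).resolve_left hc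
    exact pow_eq_zero_iff (two_ne_zero) |>.mp hg2
  -- components of ψ are holomorphic
  have hcoord : ∀ i : Fin 2, DifferentiableOn ℂ (fun z => ψ z i) (ball (0:ℂ) 1) := by
    intro i
    exact (EuclideanSpace.proj (𝕜 := ℂ) i).differentiable.comp_differentiableOn hψ
  -- the function G = b ψ₁² - a² ψ₂ is analytic on the ball and vanishes off {α 0, α 1},
  -- hence vanishes identically
  set G : ℂ → ℂ := fun z => ((b:ℝ):ℂ) * (ψ z 0)^2 - (a:ℂ)^2 * ψ z 1 with hGdef
  have hGdiff : DifferentiableOn ℂ G (ball (0:ℂ) 1) :=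
    (((hcoord 0).pow 2).const_mul _).sub ((hcoord 1).const_mul _)
  have hGan : AnalyticOnNhd ℂ G (ball (0:ℂ) 1) := hGdiff.analyticOnNhd isOpen_ball
  have hGzero : EqOn G 0 (ball (0:ℂ) 1) := by
    apply hGan.eqOn_zero_of_preconnected_of_frequently_eq_zero
      (convex_ball (0:ℂ) 1).isPreconnected (mem_ball_self one_pos)
    apply Filter.Eventually.frequently
    have hcl : IsClosed (({α 0, α 1} \ {0} : Set ℂ)) := (Set.toFinite _).isClosed
    have hop : ({α 0, α 1} \ {0} : Set ℂ)ᶜ ∈ nhds (0:ℂ) :=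
      hcl.isOpen_compl.mem_nhds (by simp)
    have hball : ball (0:ℂ) 1 ∈ nhds (0:ℂ) := isOpen_ball.mem_nhds (mem_ball_self one_pos)
    filter_upwards [nhdsWithin_le_nhds hop, nhdsWithin_le_nhds hball,
      self_mem_nhdsWithin] with z hz1 hz2 hz3
    have hz0 : z ≠ α 0 := by
      intro h
      exact hz1 ⟨by simp [h], by simpa using hz3⟩
    have hz0' : z ≠ α 1 := by
      intro h
      exact hz1 ⟨by simp [h], by simpa using hz3⟩
    exact hkey z hz2 (hBne z hz2 hz0 hz0')
  have hC : ∀ lam ∈ ball (0:ℂ) 1, ((b:ℝ):ℂ) * (ψ lam 0)^2 = (a:ℂ)^2 * ψ lam 1 := by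
    intro lam hlam
    have h0 : ((b:ℝ):ℂ) * (ψ lam 0)^2 - (a:ℂ)^2 * ψ lam 1 = 0 := hGzero hlam
    linear_combination h0
  -- B = ψ₁²/a² on the ball
  have hD : ∀ lam ∈ ball (0:ℂ) 1, B lam = (ψ lam 0)^2 / (a:ℂ)^2 := by
    intro lam hlam
    rw [hA lam hlam, Fa, ← hb]
    have hC' := hC lam hlam
    field_simp
    linear_combination (-2*((b:ℝ):ℂ)) * hC' + 2 * (ψ lam 0)^2 * hbsq
  -- B vanishes at α 0, so ψ₁(α 0) = 0
  have hBα0 : B (α 0) = 0 := by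
    rw [hBdef (α 0), Fin.prod_univ_two]
    have : mob (α 0) (α 0) = 0 := by simp [mob]
    rw [this]
    ring
  have hψα0 : ψ (α 0) 0 = 0 := by
    have h0 := hD (α 0) (hα 0)
    rw [hBα0] at h0
    have h1 : (ψ (α 0) 0)^2 = 0 := by
      field_simp at h0
      rw [zero_mul] at h0
      exact h0.symm
    exact pow_eq_zero_iff (two_ne_zero) |>.mp h1
  -- the two zeros of B coincide
  have habs0 : ‖α 0‖ < 1 := habs _ (hα 0)
  have habs1 : ‖α 1‖ < 1 := habs _ (hα 1)
  have hden0 : (1:ℂ) - (starRingEnd ℂ) (α 0) * (α 0) ≠ 0 := mob_denom_ne' habs0 habs0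
  have hden1 : (1:ℂ) - (starRingEnd ℂ) (α 1) * (α 0) ≠ 0 := mob_denom_ne' habs1 habs0
  have hα01 : α 1 = α 0 := by
    by_contra hne
    have hm0 := hasDerivAt_mob' (α 0) (α 0) hden0
    have hm1 := hasDerivAt_mob' (α 1) (α 0) hden1
    have hBfun : B = fun z => η * (mob (α 0) z * mob (α 1) z) := by
      funext z
      rw [hBdef z, Fin.prod_univ_two]
    have hDB : HasDerivAt B
        (η * ((-1 * (1 - (starRingEnd ℂ) (α 0) * (α 0)) -
            ((α 0) - (α 0)) * (-((starRingEnd ℂ) (α 0) * 1))) /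
          (1 - (starRingEnd ℂ) (α 0) * (α 0)) ^ 2 * mob (α 1) (α 0) +
          mob (α 0) (α 0) * ((-1 * (1 - (starRingEnd ℂ) (α 1) * (α 0)) -
            ((α 1) - (α 0)) * (-((starRingEnd ℂ) (α 1) * 1))) /
          (1 - (starRingEnd ℂ) (α 1) * (α 0)) ^ 2))) (α 0) := by
      rw [hBfun]
      exact (hm0.mul hm1).const_mul η
    -- deriv B (α 0) via the square representation
    have hψ0at : DifferentiableAt ℂ (fun z => ψ z 0) (α 0) :=
      (hcoord 0).differentiableAt (isOpen_ball.mem_nhds (hα 0))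
    have hsq : HasDerivAt (fun z => (ψ z 0)^2 / (a:ℂ)^2)
        ((2:ℕ) * (ψ (α 0) 0)^(2-1) * deriv (fun z => ψ z 0) (α 0) / (a:ℂ)^2) (α 0) :=
      (hψ0at.hasDerivAt.pow 2).div_const _
    have hsq0 : HasDerivAt (fun z => (ψ z 0)^2 / (a:ℂ)^2) 0 (α 0) := by
      convert hsq using 1
      rw [hψα0]
      norm_num
    have hev : B =ᶠ[nhds (α 0)] (fun z => (ψ z 0)^2 / (a:ℂ)^2) := by
      filter_upwards [isOpen_ball.mem_nhds (hα 0)] with z hz using hD z hz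
    have hderivB : deriv B (α 0) = 0 := by
      rw [hev.deriv_eq]
      exact hsq0.deriv
    rw [hDB.deriv] at hderivB
    -- but the explicit derivative is nonzero
    have hmz : mob (α 0) (α 0) = 0 := by simp [mob]
    rw [hmz] at hderivB
    have hnum : -1 * (1 - (starRingEnd ℂ) (α 0) * (α 0)) -
        ((α 0) - (α 0)) * (-((starRingEnd ℂ) (α 0) * 1)) ≠ 0 := by
      intro h
      apply hden0
      linear_combination -h
    have hm1ne : mob (α 1) (α 0) ≠ 0 :=
      mob_ne_zero' habs1 habs0 (fun h => hne h.symm)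
    have hnz : η * ((-1 * (1 - (starRingEnd ℂ) (α 0) * (α 0)) -
        ((α 0) - (α 0)) * (-((starRingEnd ℂ) (α 0) * 1))) /
        (1 - (starRingEnd ℂ) (α 0) * (α 0)) ^ 2 * mob (α 1) (α 0)) ≠ 0 :=
      mul_ne_zero hηne (mul_ne_zero (div_ne_zero hnum (pow_ne_zero 2 hden0)) hm1ne)
    exact hnz (by linear_combination hderivB)
  -- assemble the conclusion
  refine ⟨fun lam hlam => ⟨hC lam hlam, hD lam hlam⟩, α 0, hα 0, η, hη, ?_⟩
  intro lam hlam
  have hBsq : B lam = η * (mob (α 0) lam) ^ 2 := by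
    rw [hBdef lam, Fin.prod_univ_two, hα01]
    ring
  have hψ0sq : (ψ lam 0) ^ 2 = (a:ℂ)^2 * η * (mob (α 0) lam) ^ 2 := by
    have h0 := hD lam hlam
    rw [hBsq] at h0
    field_simp at h0
    linear_combination -h0
  refine ⟨hBsq, ?_, hψ0sq⟩
  have h1 := hC lam hlam
  rw [hψ0sq] at h1
  have h2 : (a:ℂ)^2 * (((b:ℝ):ℂ) * η * (mob (α 0) lam) ^ 2) = (a:ℂ)^2 * ψ lam 1 := by
    linear_combination h1
  exact (mul_left_cancel₀ haC2 h2).symm
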